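/- Let G(x,y,q) = Σ_{n,k≥0} Σ_{π ∈ C_{n,k}} x^n y^k q^{sp(π)}, a well-defined formal power series in ℚ[[x,y,q]]. For each integer a ≥ 1 let A_a = 1 − y²·x^{2a+1}·(q−1)·(1−x)^{−1} ∈ ℚ[[x,y,q]], which has constant term 1 and is invertible. Then G · (1 − Σ_{a≥1} x^a·y·A_a^{−1}) = 1, where the sum over a converges coefficientwise since the a-th summand has x-adic order at least a. Equivalently, G(x,y,q) = 1/(1 − Σ_{a≥1} x^a y/(1 − y²x^{2a+1}(q−1)/(1−x))). -/

import Mathlib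

/-- The indices (0-based) of symmetric peaks of a list of naturals:
`i` is a symmetric peak if `L i < L (i+1)` and `L i = L (i+2)`. -/
def symPeakIdx (L : List ℕ) : Finset ℕ :=
  (Finset.range L.length).filter (fun i =>
    i + 2 < L.length ∧ L.getD i 0 < L.getD (i+1) 0 ∧ L.getD i 0 = L.getD (i+2) 0)

/-- `sp π`: the number of symmetric peaks of `π`. -/
def spL (L : List ℕ) : ℕ := (symPeakIdx L).card

/-- Variables: `X 0 = x`, `X 1 = y`, `X 2 = q`. -/
noncomputable abbrev Xv : Fin 3 → MvPowerSeries (Fin 3) ℚ := MvPowerSeries.X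

/-- `G(x,y,q) = Σ_{n,k≥0} Σ_{π ∈ C_{n,k}} x^n y^k q^{sp(π)}`, defined coefficientwise. -/
noncomputable def Gsp : MvPowerSeries (Fin 3) ℚ := fun m =>
  ((Finset.univ : Finset (Composition (m 0))).filter (fun c =>
    c.length = m 1 ∧ spL c.blocks = m 2)).card

/-- `A_a = 1 − y²·x^{2a+1}·(q−1)·(1−x)⁻¹`. -/
noncomputable def Asp (a : ℕ) : MvPowerSeries (Fin 3) ℚ :=
  1 - (Xv 1)^2 * (Xv 0)^(2*a+1) * (Xv 2 - 1) * (1 - Xv 0)⁻¹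

/-- `Σ_{a≥1} x^a·y·A_a⁻¹`, defined coefficientwise: since the `a`-th summand has `x`-adic
order at least `a`, only the terms with `1 ≤ a ≤ m 0` contribute to the coefficient of a
monomial `m`. -/
noncomputable def Ssp : MvPowerSeries (Fin 3) ℚ := fun m =>
  ∑ a ∈ Finset.Icc 1 (m 0), MvPowerSeries.coeff m ((Xv 0)^a * Xv 1 * (Asp a)⁻¹)

open Finset MvPowerSeries

/-- the `ε` correction: `1` if prepending `a` to `L` creates a new symmetric peak. -/
def epsN (a : ℕ) (L : List ℕ) : ℕ :=
  if 2 ≤ L.length ∧ a < L.getD 0 0 ∧ a = L.getD 1 0 then 1 else 0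

lemma epsN_le_one (a : ℕ) (L : List ℕ) : epsN a L ≤ 1 := by
  unfold epsN; split_ifs <;> omega

lemma epsN_eq_zero_of_len (a : ℕ) (L : List ℕ) (h : L.length < 2) : epsN a L = 0 := by
  unfold epsN; rw [if_neg]; omega

lemma spL_cons (a : ℕ) (L : List ℕ) : spL (a :: L) = spL L + epsN a L := by
  unfold spL symPeakIdx epsN
  rw [Finset.card_filter, Finset.card_filter]
  simp only [List.length_cons]
  rw [Finset.sum_range_succ']
  have h1 : ∀ i, (if i + 1 + 2 < L.length + 1 ∧ (a::L).getD (i+1) 0 < (a::L).getD (i+1+1) 0 ∧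
      (a::L).getD (i+1) 0 = (a::L).getD (i+1+2) 0 then 1 else 0)
      = (if i + 2 < L.length ∧ L.getD i 0 < L.getD (i+1) 0 ∧ L.getD i 0 = L.getD (i+2) 0 then (1:ℕ) else 0) := by
    intro i
    have : i + 1 + 2 < L.length + 1 ↔ i + 2 < L.length := by omega
    simp [List.getD_cons_succ, this]
  simp only [h1]
  congr 1
  have h2 : (0:ℕ) + 2 < L.length + 1 ↔ 2 ≤ L.length := by omega
  simp [List.getD_cons_succ, List.getD_cons_zero, h2]

/-- The finset of block-lists of compositions of `n`. -/
def LC (n : ℕ) : Finset (List ℕ) :=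
  (Finset.univ : Finset (Composition n)).image Composition.blocks

lemma blocks_injective (n : ℕ) : Function.Injective (Composition.blocks (n := n)) := by
  rintro ⟨a, _, _⟩ ⟨b, _, _⟩ h; simpa using h

lemma mem_LC {n : ℕ} {L : List ℕ} : L ∈ LC n ↔ (∀ i ∈ L, 0 < i) ∧ L.sum = n := by
  constructor
  · intro h
    simp only [LC, Finset.mem_image, Finset.mem_univ, true_and] at h
    obtain ⟨c, rfl⟩ := h
    exact ⟨fun i hi => c.blocks_pos hi, c.blocks_sum⟩
  · rintro ⟨h1, h2⟩
    simp only [LC, Finset.mem_image, Finset.mem_univ, true_and]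
    exact ⟨⟨L, fun hi => h1 _ hi, h2⟩, rfl⟩

lemma card_comp_filter (n : ℕ) (P : List ℕ → Prop) [DecidablePred P] :
    ((Finset.univ : Finset (Composition n)).filter (fun c => P c.blocks)).card
      = ((LC n).filter P).card := by
  rw [LC, Finset.filter_image, Finset.card_image_of_injective _ (blocks_injective n)]

/-- number of compositions of `n` with `k` parts and `s` symmetric peaks -/
def Mc (n k s : ℕ) : ℕ := ((LC n).filter (fun L => L.length = k ∧ spL L = s)).card

/-- ... additionally with first part `a` -/
def cc (a n k s : ℕ) : ℕ :=
  ((LC n).filter (fun L => L.getD 0 0 = a ∧ L.length = k ∧ spL L = s)).card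

/-- ... additionally with `ε a L = 1` -/
def De (a n k s : ℕ) : ℕ :=
  ((LC n).filter (fun L => L.length = k ∧ spL L = s ∧ epsN a L = 1)).card

lemma cc_eq_zero (a n k s : ℕ) (ha : 0 < a) (h : n < a ∨ k = 0) : cc a n k s = 0 := by
  rw [cc, Finset.card_eq_zero, Finset.filter_eq_empty_iff]
  rintro L hL ⟨hhead, hlen, _⟩
  rw [mem_LC] at hL
  cases L with
  | nil => simp at hhead; omega
  | cons x T =>
    simp only [List.getD_cons_zero] at hhead
    subst hhead
    simp only [List.sum_cons] at hL
    simp only [List.length_cons] at hlen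
    omega

lemma De_eq_zero_of_k (a n k s : ℕ) (h : k < 2) : De a n k s = 0 := by
  rw [De, Finset.card_eq_zero, Finset.filter_eq_empty_iff]
  rintro L _ ⟨hlen, _, heps⟩
  have := epsN_eq_zero_of_len a L (by omega)
  omega

/-- cons bijection: lists in `LC (a+n)` with head `a` correspond to their tails in `LC n`. -/
lemma cons_card (a n : ℕ) (ha : 0 < a) (Q : List ℕ → Prop) [DecidablePred Q] :
    ((LC (a + n)).filter (fun L => L.getD 0 0 = a ∧ Q L.tail)).card
      = ((LC n).filter Q).card := by
  apply Finset.card_nbij' (i := fun L => L.tail) (j := fun T => a :: T)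
  · rintro L hL
    rw [Finset.mem_coe, Finset.mem_filter] at hL
    obtain ⟨hL, hhead, hQ⟩ := hL
    rw [mem_LC] at hL
    obtain ⟨hpos, hsum⟩ := hL
    rw [Finset.mem_coe, Finset.mem_filter, mem_LC]
    cases L with
    | nil => simp at hhead; omega
    | cons x T =>
      simp only [List.getD_cons_zero] at hhead
      subst hhead
      simp only [List.sum_cons] at hsum
      simp only [List.tail_cons]
      refine ⟨⟨fun i hi => hpos i (List.mem_cons_of_mem _ hi), by omega⟩, hQ⟩
  · rintro T hT
    rw [Finset.mem_coe, Finset.mem_filter] at hT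
    obtain ⟨hT, hQ⟩ := hT
    rw [mem_LC] at hT
    rw [Finset.mem_coe, Finset.mem_filter, mem_LC]
    refine ⟨⟨?_, ?_⟩, ?_, hQ⟩
    · rintro i hi
      rcases List.mem_cons.mp hi with rfl | hi
      · exact ha
      · exact hT.1 i hi
    · simp [hT.2]
    · simp
  · rintro L hL
    rw [Finset.mem_coe, Finset.mem_filter] at hL
    obtain ⟨_, hhead, _⟩ := hL
    cases L with
    | nil => simp at hhead; omega
    | cons x T => simp only [List.getD_cons_zero] at hhead; subst hhead; rfl
  · rintro T _; rfl

/-- partition of all compositions of `n ≥ 1` according to the first part -/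
lemma Mc_eq_sum (n k s : ℕ) (hn : 0 < n) :
    Mc n k s = ∑ a ∈ Finset.Icc 1 n, cc a n k s := by
  rw [Mc]
  rw [Finset.card_eq_sum_card_fiberwise (f := fun L => L.getD 0 0) (t := Finset.Icc 1 n)]
  · apply Finset.sum_congr rfl
    intro a _
    rw [cc, Finset.filter_filter]
    congr 1
    apply Finset.filter_congr
    intro L _
    constructor
    · rintro ⟨⟨h1, h2⟩, h3⟩; exact ⟨h3, h1, h2⟩
    · rintro ⟨h3, h1, h2⟩; exact ⟨⟨h1, h2⟩, h3⟩
  · intro L hL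
    rw [Finset.mem_coe, Finset.mem_filter] at hL
    obtain ⟨hL, _⟩ := hL
    rw [mem_LC] at hL
    obtain ⟨hpos, hsum⟩ := hL
    cases L with
    | nil => simp at hsum; omega
    | cons x T =>
      simp only [List.sum_cons] at hsum
      simp only [List.getD_cons_zero, Finset.mem_coe, Finset.mem_Icc]
      have := hpos x (List.mem_cons_self)
      omega

/-- head-`a` compositions in terms of their tails -/
lemma cc_eq (a n k s : ℕ) (ha : 0 < a) :
    cc a (a + n) (k+1) s
      = ((LC n).filter (fun T => T.length = k ∧ spL T + epsN a T = s)).card := by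
  rw [cc, ← cons_card a n ha (fun T => T.length = k ∧ spL T + epsN a T = s)]
  congr 1
  apply Finset.filter_congr
  intro L _
  constructor
  · rintro ⟨hhead, hlen, hsp⟩
    have hne : L ≠ [] := by
      intro h; subst h; simp at hhead; omega
    have hL : L = a :: L.tail := by
      conv_lhs => rw [← List.cons_head_tail hne]
      congr 1
      cases L with
      | nil => exact absurd rfl hne
      | cons x T => simpa using hhead
    refine ⟨hhead, ?_, ?_⟩
    · have h1 : L.tail.length = L.length - 1 := List.length_tail
      have h2 : 0 < L.length := List.length_pos_iff.mpr hne
      omega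
    · rw [hL, spL_cons] at hsp; exact hsp
  · rintro ⟨hhead, hlen, hsp⟩
    have hne : L ≠ [] := by
      intro h; subst h; simp at hhead; omega
    have hL : L = a :: L.tail := by
      conv_lhs => rw [← List.cons_head_tail hne]
      congr 1
      cases L with
      | nil => exact absurd rfl hne
      | cons x T => simpa using hhead
    refine ⟨hhead, ?_, ?_⟩
    · have h1 : L.tail.length = L.length - 1 := List.length_tail
      have h2 : 0 < L.length := List.length_pos_iff.mpr hne
      omega
    · rw [hL, spL_cons]; exact hsp

/-- the inclusion-exclusion split according to whether prepending `a` creates a peak -/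
lemma split_card (a n k s : ℕ) :
    ((LC n).filter (fun T => T.length = k ∧ spL T + epsN a T = s)).card + De a n k s
      = Mc n k s + (if 1 ≤ s then De a n k (s-1) else 0) := by
  have key : ∀ (s' : ℕ), De a n k s' = ∑ T ∈ LC n,
      (if T.length = k ∧ spL T = s' ∧ epsN a T = 1 then 1 else 0) := by
    intro s'; rw [De, Finset.card_filter]
  rw [De, Mc, Finset.card_filter, Finset.card_filter, Finset.card_filter]
  rw [← Finset.sum_add_distrib]
  have : (if 1 ≤ s then De a n k (s-1) else 0)
      = ∑ T ∈ LC n, (if 1 ≤ s then (if T.length = k ∧ spL T = s - 1 ∧ epsN a T = 1 then 1 else 0) else 0) := by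
    split_ifs with h
    · rw [key]
    · simp
  rw [this, ← Finset.sum_add_distrib]
  apply Finset.sum_congr rfl
  intro T _
  have he : epsN a T = 0 ∨ epsN a T = 1 := by
    have := epsN_le_one a T; omega
  split_ifs <;> omega

/-- `De` as a sum over the extra first part `b` -/
lemma De_eq_sum (a n k s : ℕ) (ha : 0 < a) :
    De a n (k+1) s = ∑ b ∈ Finset.Icc (a+1) n, cc a (n - b) k s := by
  rw [De]
  rw [Finset.card_eq_sum_card_fiberwise (f := fun L => L.getD 0 0) (t := Finset.Icc (a+1) n)]
  · apply Finset.sum_congr rfl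
    intro b hb
    rw [Finset.mem_Icc] at hb
    have hb0 : 0 < b := by omega
    rw [cc]
    set c := n - b with hc
    have hsplit : n = b + c := by omega
    rw [hsplit]
    rw [← cons_card b c hb0 (fun T => T.getD 0 0 = a ∧ T.length = k ∧ spL T = s)]
    rw [Finset.filter_filter]
    congr 1
    apply Finset.filter_congr
    intro L hL
    constructor
    · rintro ⟨⟨hlen, hsp, heps⟩, hhead⟩
      have hne : L ≠ [] := by intro h; subst h; simp at hhead; omega
      have hLeq : L = b :: L.tail := by
        conv_lhs => rw [← List.cons_head_tail hne]
        congr 1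
        cases L with
        | nil => exact absurd rfl hne
        | cons x T => simpa using hhead
      have hcond2 : 2 ≤ L.length ∧ a < L.getD 0 0 ∧ a = L.getD 1 0 := by
        by_contra hcon
        unfold epsN at heps
        rw [if_neg hcon] at heps
        omega
      obtain ⟨hlen2, hlt, heq⟩ := hcond2
      refine ⟨hhead, ?_, ?_, ?_⟩
      · -- tail head = a
        cases L with
        | nil => exact absurd rfl hne
        | cons x T =>
          simp only [List.tail_cons]
          cases T with
          | nil => simp at hlen2
          | cons y R => simpa using heq.symm
      · have h1 : L.tail.length = L.length - 1 := List.length_tail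
        have h2 : 0 < L.length := List.length_pos_iff.mpr hne
        omega
      · rw [hLeq, spL_cons] at hsp
        have : epsN b L.tail = 0 := by
          unfold epsN
          rw [if_neg]
          rintro ⟨_, hcon, _⟩
          cases L with
          | nil => exact absurd rfl hne
          | cons x T =>
            simp only [List.tail_cons] at hcon
            simp only [List.getD_cons_zero] at hhead
            cases T with
            | nil => simp at hcon
            | cons y R =>
              simp only [List.getD_cons_zero] at hcon
              simp only [List.getD_cons_succ, List.getD_cons_zero] at heq
              omega
        omega
    · rintro ⟨hhead, htail, hlen, hsp⟩
      have hne : L ≠ [] := by intro h; subst h; simp at hhead; omega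
      have hLeq : L = b :: L.tail := by
        conv_lhs => rw [← List.cons_head_tail hne]
        congr 1
        cases L with
        | nil => exact absurd rfl hne
        | cons x T => simpa using hhead
      have htne : L.tail ≠ [] := by intro h; rw [h] at htail; simp at htail; omega
      have hc3 : 2 ≤ L.length ∧ a < L.getD 0 0 ∧ a = L.getD 1 0 := by
        refine ⟨?_, ?_, ?_⟩
        · have h1 : L.tail.length = L.length - 1 := List.length_tail
          have h2 : 0 < L.tail.length := List.length_pos_iff.mpr htne
          omega
        · rw [hLeq]; simp only [List.getD_cons_zero]; omega
        · rw [hLeq]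
          cases h : L.tail with
          | nil => exact absurd h htne
          | cons y R =>
            rw [h] at htail
            simp only [List.getD_cons_succ, List.getD_cons_zero]
            simp only [List.getD_cons_zero] at htail
            omega
      have heps1 : epsN a L = 1 := by unfold epsN; rw [if_pos hc3]
      refine ⟨⟨?_, ?_, heps1⟩, hhead⟩
      · have h1 : L.tail.length = L.length - 1 := List.length_tail
        have h2 : 0 < L.length := List.length_pos_iff.mpr hne
        omega
      · rw [hLeq, spL_cons]
        have : epsN b L.tail = 0 := by
          unfold epsN
          rw [if_neg]
          rintro ⟨_, hcon, _⟩
          rw [htail] at hcon; omega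
        omega
  · -- heads of D-lists lie in Icc (a+1) n
    intro L hL
    rw [Finset.mem_coe, Finset.mem_filter] at hL
    obtain ⟨hLC, hlen, hsp, heps⟩ := hL
    rw [mem_LC] at hLC
    obtain ⟨hpos, hsum⟩ := hLC
    have hcond : 2 ≤ L.length ∧ a < L.getD 0 0 ∧ a = L.getD 1 0 := by
      by_contra hcon
      rw [epsN, if_neg hcon] at heps; omega
    obtain ⟨hl2, hlt, _⟩ := hcond
    cases L with
    | nil => simp at hl2
    | cons x T =>
      simp only [List.getD_cons_zero] at hlt ⊢
      simp only [List.sum_cons] at hsum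
      rw [Finset.mem_coe, Finset.mem_Icc]
      omega

/-! ### Auxiliary series -/

/-- generating series for head-`a` compositions -/
noncomputable def GaS (a : ℕ) : MvPowerSeries (Fin 3) ℚ := fun m =>
  (cc a (m 0) (m 1) (m 2) : ℚ)

/-- generating series for `De` -/
noncomputable def DaS (a : ℕ) : MvPowerSeries (Fin 3) ℚ := fun m =>
  (De a (m 0) (m 1) (m 2) : ℚ)

noncomputable def tri (a b c : ℕ) : Fin 3 →₀ ℕ :=
  Finsupp.single 0 a + Finsupp.single 1 b + Finsupp.single 2 c

noncomputable def mon3 (a b c : ℕ) : MvPowerSeries (Fin 3) ℚ :=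
  MvPowerSeries.monomial (tri a b c) 1

@[simp] lemma tri_apply0 (a b c : ℕ) : tri a b c 0 = a := by
  simp [tri, Finsupp.add_apply, Finsupp.single_apply, Fin.ext_iff]
@[simp] lemma tri_apply1 (a b c : ℕ) : tri a b c 1 = b := by
  simp [tri, Finsupp.add_apply, Finsupp.single_apply, Fin.ext_iff]
@[simp] lemma tri_apply2 (a b c : ℕ) : tri a b c 2 = c := by
  simp [tri, Finsupp.add_apply, Finsupp.single_apply, Fin.ext_iff]

lemma Xpow3 (a b c : ℕ) : (Xv 0)^a * (Xv 1)^b * (Xv 2)^c = mon3 a b c := by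
  rw [show Xv = MvPowerSeries.X from rfl]
  rw [MvPowerSeries.X_pow_eq, MvPowerSeries.X_pow_eq, MvPowerSeries.X_pow_eq,
    MvPowerSeries.monomial_mul_monomial, MvPowerSeries.monomial_mul_monomial, mon3, tri]
  norm_num

lemma le3_iff (e m : Fin 3 →₀ ℕ) : e ≤ m ↔ e 0 ≤ m 0 ∧ e 1 ≤ m 1 ∧ e 2 ≤ m 2 := by
  rw [Finsupp.le_def]
  constructor
  · intro h; exact ⟨h 0, h 1, h 2⟩
  · rintro ⟨h0, h1, h2⟩ i; fin_cases i <;> assumption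

lemma coeff_mon3_mul (a b c : ℕ) (F : MvPowerSeries (Fin 3) ℚ) (m : Fin 3 →₀ ℕ) :
    MvPowerSeries.coeff m (mon3 a b c * F) =
      if a ≤ m 0 ∧ b ≤ m 1 ∧ c ≤ m 2 then
        F (m - tri a b c)
      else 0 := by
  rw [mon3, MvPowerSeries.coeff_monomial_mul]
  simp only [le3_iff, tri_apply0, tri_apply1, tri_apply2, one_mul,
    MvPowerSeries.coeff_apply]

@[simp] lemma sub_tri_apply0 (m : Fin 3 →₀ ℕ) (a b c : ℕ) : (m - tri a b c) 0 = m 0 - a := by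
  rw [Finsupp.tsub_apply, tri_apply0]
@[simp] lemma sub_tri_apply1 (m : Fin 3 →₀ ℕ) (a b c : ℕ) : (m - tri a b c) 1 = m 1 - b := by
  rw [Finsupp.tsub_apply, tri_apply1]
@[simp] lemma sub_tri_apply2 (m : Fin 3 →₀ ℕ) (a b c : ℕ) : (m - tri a b c) 2 = m 2 - c := by
  rw [Finsupp.tsub_apply, tri_apply2]

lemma coeff_apply' (F : MvPowerSeries (Fin 3) ℚ) (m : Fin 3 →₀ ℕ) :
    MvPowerSeries.coeff m F = F m := rfl

lemma coeff_Gsp (m : Fin 3 →₀ ℕ) :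
    MvPowerSeries.coeff m Gsp = ((Mc (m 0) (m 1) (m 2) : ℕ) : ℚ) := by
  rw [MvPowerSeries.coeff_apply]
  show (((Finset.univ : Finset (Composition (m 0))).filter (fun c =>
    c.length = m 1 ∧ spL c.blocks = m 2)).card : ℚ) = _
  norm_cast
  rw [Mc, ← card_comp_filter (m 0) (fun L => L.length = m 1 ∧ spL L = m 2)]

lemma coeff_GaS (a : ℕ) (m : Fin 3 →₀ ℕ) :
    MvPowerSeries.coeff m (GaS a) = ((cc a (m 0) (m 1) (m 2) : ℕ) : ℚ) := rfl

lemma coeff_DaS (a : ℕ) (m : Fin 3 →₀ ℕ) :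
    MvPowerSeries.coeff m (DaS a) = ((De a (m 0) (m 1) (m 2) : ℕ) : ℚ) := rfl

/-- the ℕ-level core of the peak recurrence -/
lemma key1 (a n k s : ℕ) (ha : 0 < a) :
    (cc a n k s : ℚ) + (if a ≤ n ∧ 1 ≤ k then (De a (n-a) (k-1) s : ℚ) else 0)
  = (if a ≤ n ∧ 1 ≤ k then (Mc (n-a) (k-1) s : ℚ) else 0)
  + (if a ≤ n ∧ 1 ≤ k ∧ 1 ≤ s then (De a (n-a) (k-1) (s-1) : ℚ) else 0) := by
  by_cases h : a ≤ n ∧ 1 ≤ k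
  · obtain ⟨h1, h2⟩ := h
    obtain ⟨n', rfl⟩ : ∃ n', n = a + n' := ⟨n - a, by omega⟩
    obtain ⟨k', rfl⟩ : ∃ k', k = k' + 1 := ⟨k - 1, by omega⟩
    have e1 : a + n' - a = n' := by omega
    have e2 : k' + 1 - 1 = k' := by omega
    rw [e1, e2, if_pos ⟨h1, h2⟩, if_pos ⟨h1, h2⟩]
    have hsplit := split_card a n' k' s
    rw [cc_eq a n' k' s ha]
    have hcast : (((LC n').filter (fun T => T.length = k' ∧ spL T + epsN a T = s)).card : ℚ)
        + (De a n' k' s : ℚ) = (Mc n' k' s : ℚ) + (if 1 ≤ s then (De a n' k' (s-1) : ℚ) else 0) := by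
      have := congrArg (fun x : ℕ => (x : ℚ)) hsplit
      push_cast at this ⊢
      convert this using 2
    rw [hcast]
    have hiff : (1 ≤ s) ↔ (a ≤ a + n' ∧ 1 ≤ k' + 1 ∧ 1 ≤ s) := by omega
    congr 1
    simp only [← hiff]
  · have hz : cc a n k s = 0 := cc_eq_zero a n k s ha (by omega)
    have h3 : ¬(a ≤ n ∧ 1 ≤ k ∧ 1 ≤ s) := by
      rintro ⟨u, v, _⟩; exact h ⟨u, v⟩
    rw [hz, if_neg h, if_neg h, if_neg h3]
    norm_num

/-- ℕ-level core of the `(1-x)`-telescoping -/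
lemma De_eq_range (a n k s : ℕ) (ha : 0 < a) :
    De a n (k+1) s = ∑ j ∈ Finset.range (n - a), cc a j k s := by
  rw [De_eq_sum a n k s ha]
  apply Finset.sum_nbij' (i := fun b => n - b) (j := fun j => n - j)
  · intro b hb; rw [Finset.mem_Icc] at hb; rw [Finset.mem_range]; omega
  · intro j hj; rw [Finset.mem_range] at hj; rw [Finset.mem_Icc]; omega
  · intro b hb; rw [Finset.mem_Icc] at hb; omega
  · intro j hj; rw [Finset.mem_range] at hj; omega
  · intro b _; rfl

lemma key2 (a n k s : ℕ) (ha : 0 < a) :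
    (De a n k s : ℚ) - (if 1 ≤ n then (De a (n-1) k s : ℚ) else 0)
  = if a+1 ≤ n ∧ 1 ≤ k then (cc a (n - (a+1)) (k-1) s : ℚ) else 0 := by
  cases k with
  | zero =>
    rw [De_eq_zero_of_k a n 0 s (by omega), De_eq_zero_of_k a (n-1) 0 s (by omega)]
    have : ¬(a + 1 ≤ n ∧ 1 ≤ 0) := by omega
    rw [if_neg this]
    split_ifs <;> norm_num
  | succ k' =>
    rw [De_eq_range a n k' s ha]
    by_cases hn : a + 1 ≤ n
    · have h1 : 1 ≤ n := by omega
      rw [if_pos h1, De_eq_range a (n-1) k' s ha, if_pos ⟨hn, by omega⟩]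
      have h2 : n - a = (n - 1 - a) + 1 := by omega
      rw [h2, Finset.sum_range_succ]
      have h3 : n - 1 - a = n - (a + 1) := by omega
      rw [h3]
      push_cast
      ring
    · have hr : n - a = 0 := by omega
      rw [hr]
      have : ¬(a + 1 ≤ n ∧ 1 ≤ k' + 1) := by omega
      rw [if_neg this]
      split_ifs with h1
      · rw [De_eq_range a (n-1) k' s ha]
        have : n - 1 - a = 0 := by omega
        rw [this]
        simp
      · simp

/-- Series form of the peak recurrence:
`G_a + x^a y · D_a = x^a y · G + x^a y q · D_a`. -/
lemma S1 (a : ℕ) (ha : 0 < a) :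
    GaS a + mon3 a 1 0 * DaS a = mon3 a 1 0 * Gsp + mon3 a 1 1 * DaS a := by
  apply MvPowerSeries.ext
  intro m
  rw [map_add, map_add, coeff_mon3_mul, coeff_mon3_mul, coeff_mon3_mul, coeff_GaS]
  have hD : ∀ e : Fin 3 →₀ ℕ, DaS a e = ((De a (e 0) (e 1) (e 2) : ℕ) : ℚ) := fun _ => rfl
  have hG : ∀ e : Fin 3 →₀ ℕ, Gsp e = ((Mc (e 0) (e 1) (e 2) : ℕ) : ℚ) := fun e => coeff_Gsp e
  simp only [hD, hG, sub_tri_apply0, sub_tri_apply1, sub_tri_apply2, Nat.sub_zero, Nat.zero_le,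
    true_and, and_true]
  exact key1 a (m 0) (m 1) (m 2) ha

/-- Series form of the telescoping: `(1 - x) · D_a = x^{a+1} y · G_a`. -/
lemma S2 (a : ℕ) (ha : 0 < a) :
    (1 - Xv 0) * DaS a = mon3 (a+1) 1 0 * GaS a := by
  apply MvPowerSeries.ext
  intro m
  have hX : Xv 0 = mon3 1 0 0 := by
    have := Xpow3 1 0 0
    simpa using this
  rw [sub_mul, one_mul, map_sub, hX, coeff_mon3_mul, coeff_mon3_mul, coeff_DaS]
  have hD : ∀ e : Fin 3 →₀ ℕ, DaS a e = ((De a (e 0) (e 1) (e 2) : ℕ) : ℚ) := fun _ => rfl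
  have hGa : ∀ e : Fin 3 →₀ ℕ, GaS a e = ((cc a (e 0) (e 1) (e 2) : ℕ) : ℚ) := fun _ => rfl
  simp only [hD, hGa, sub_tri_apply0, sub_tri_apply1, sub_tri_apply2, Nat.sub_zero, Nat.zero_le,
    and_true, true_and]
  exact key2 a (m 0) (m 1) (m 2) ha

lemma constCoeff_one_sub_X : MvPowerSeries.constantCoeff (1 - Xv 0) ≠ 0 := by
  rw [map_sub, map_one, MvPowerSeries.constantCoeff_X]
  norm_num

lemma constCoeff_Asp (a : ℕ) : MvPowerSeries.constantCoeff (Asp a) ≠ 0 := by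
  rw [Asp, map_sub, map_one, map_mul, map_mul, map_mul, map_pow,
    MvPowerSeries.constantCoeff_X]
  norm_num

lemma tri_eq (a b c a' b' c' : ℕ) (h1 : a = a') (h2 : b = b') (h3 : c = c') :
    tri a b c = tri a' b' c' := by rw [h1, h2, h3]

lemma tri_add (a b c a' b' c' : ℕ) :
    tri a b c + tri a' b' c' = tri (a+a') (b+b') (c+c') := by
  ext i
  fin_cases i <;> simp [Finsupp.add_apply]

lemma mon3_mul_mon3 (a b c a' b' c' : ℕ) :
    mon3 a b c * mon3 a' b' c' = mon3 (a+a') (b+b') (c+c') := by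
  rw [mon3, mon3, mon3, MvPowerSeries.monomial_mul_monomial, one_mul, tri_add]

lemma hq_eq (a : ℕ) : mon3 a 1 1 = mon3 a 1 0 * Xv 2 := by
  have h : mon3 0 0 1 = Xv 2 := by simpa using (Xpow3 0 0 1).symm
  rw [← h, mon3_mul_mon3]
  norm_num

/-- The main algebraic identity: `A_a · G_a = x^a y · G`. -/
lemma Asp_mul_GaS (a : ℕ) (ha : 0 < a) : Asp a * GaS a = mon3 a 1 0 * Gsp := by
  have hu : (1 - Xv 0) * (1 - Xv 0)⁻¹ = 1 :=
    MvPowerSeries.mul_inv_cancel _ constCoeff_one_sub_X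
  have hD : DaS a = (1 - Xv 0)⁻¹ * (mon3 (a+1) 1 0 * GaS a) := by
    rw [← S2 a ha, ← mul_assoc, mul_comm ((1 - Xv 0)⁻¹) (1 - Xv 0), hu, one_mul]
  have hE1 := S1 a ha
  rw [hq_eq a, hD] at hE1
  have hPW : mon3 a 1 0 * mon3 (a+1) 1 0 = (Xv 1)^2 * (Xv 0)^(2*a+1) := by
    rw [mon3_mul_mon3]
    have h1 : a + (a+1) = 2*a+1 := by omega
    rw [h1, show (1+1 : ℕ) = 2 from rfl, show (0+0 : ℕ) = 0 from rfl,
      ← Xpow3 (2*a+1) 2 0, pow_zero, mul_one]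
    ring
  rw [Asp]
  linear_combination hE1 + (Xv 2 - 1) * (1 - Xv 0)⁻¹ * (GaS a) * hPW

lemma m0_zero_iff (m : Fin 3 →₀ ℕ) : m = 0 ↔ m 0 = 0 ∧ m 1 = 0 ∧ m 2 = 0 := by
  constructor
  · rintro rfl; simp
  · rintro ⟨h0, h1, h2⟩
    ext i
    fin_cases i <;> simpa

lemma LC_zero : LC 0 = {([] : List ℕ)} := by
  ext L
  rw [mem_LC, Finset.mem_singleton]
  constructor
  · rintro ⟨hpos, hsum⟩
    cases L with
    | nil => rfl
    | cons x T =>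
      exfalso
      have := hpos x (List.mem_cons_self)
      simp only [List.sum_cons] at hsum
      omega
  · rintro rfl; simp

lemma Mc_zero (k s : ℕ) : Mc 0 k s = if k = 0 ∧ s = 0 then 1 else 0 := by
  rw [Mc, LC_zero, Finset.filter_singleton]
  have hsp : spL ([] : List ℕ) = 0 := rfl
  split_ifs with h1 h2 h2 <;> simp_all <;> omega

/-- decomposition of `G` by the first part -/
lemma coeff_Gsp_decomp (m : Fin 3 →₀ ℕ) :
    MvPowerSeries.coeff m Gsp
      = (if m = 0 then 1 else 0) + ∑ a ∈ Finset.Icc 1 (m 0), MvPowerSeries.coeff m (GaS a) := by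
  rw [coeff_Gsp]
  rcases Nat.eq_zero_or_pos (m 0) with h0 | hpos
  · rw [h0, Mc_zero]
    have : Finset.Icc 1 0 = (∅ : Finset ℕ) := rfl
    rw [this, Finset.sum_empty, add_zero]
    have hm : (m = 0) ↔ (m 1 = 0 ∧ m 2 = 0) := by rw [m0_zero_iff]; omega
    simp only [hm]
    split_ifs <;> simp
  · have hm : m ≠ 0 := by
      intro h; rw [m0_zero_iff] at h; omega
    rw [if_neg hm, zero_add, Mc_eq_sum _ _ _ hpos]
    push_cast
    rfl

lemma coeff_Xpow_zero (a : ℕ) (m : Fin 3 →₀ ℕ) (h : m 0 < a) :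
    MvPowerSeries.coeff m ((Xv 0)^a * Xv 1 * (Asp a)⁻¹) = 0 := by
  have hx : (Xv 0)^a * Xv 1 = mon3 a 1 0 := by
    have := Xpow3 a 1 0
    simpa using this
  rw [hx, coeff_mon3_mul, if_neg]
  rintro ⟨h1, _⟩
  omega

lemma Gsp_mul_unit (a : ℕ) (ha : 0 < a) :
    Gsp * ((Xv 0)^a * Xv 1 * (Asp a)⁻¹) = GaS a := by
  have hx : (Xv 0)^a * Xv 1 = mon3 a 1 0 := by
    have := Xpow3 a 1 0
    simpa using this
  have hA : Asp a * (Asp a)⁻¹ = 1 := MvPowerSeries.mul_inv_cancel _ (constCoeff_Asp a)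
  calc Gsp * ((Xv 0)^a * Xv 1 * (Asp a)⁻¹)
      = (mon3 a 1 0 * Gsp) * (Asp a)⁻¹ := by rw [hx]; ring
    _ = (Asp a * GaS a) * (Asp a)⁻¹ := by rw [Asp_mul_GaS a ha]
    _ = GaS a * (Asp a * (Asp a)⁻¹) := by ring
    _ = GaS a := by rw [hA, mul_one]


/-- `G·(1 − Σ_{a≥1} x^a y A_a⁻¹) = 1`, i.e.
`G(x,y,q) = 1/(1 − Σ_{a≥1} x^a y/(1 − y²x^{2a+1}(q−1)/(1−x)))`. -/
theorem sp_generating_function : Gsp * (1 - Ssp) = 1 := by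
  classical
  apply MvPowerSeries.ext
  intro m
  have hmulS : MvPowerSeries.coeff m (Gsp * Ssp)
      = ∑ a ∈ Finset.Icc 1 (m 0), MvPowerSeries.coeff m (GaS a) := by
    rw [MvPowerSeries.coeff_mul]
    have step1 : ∀ p ∈ Finset.HasAntidiagonal.antidiagonal m,
        MvPowerSeries.coeff p.1 Gsp * MvPowerSeries.coeff p.2 Ssp
          = ∑ a ∈ Finset.Icc 1 (m 0),
              MvPowerSeries.coeff p.1 Gsp
                * MvPowerSeries.coeff p.2 ((Xv 0)^a * Xv 1 * (Asp a)⁻¹) := by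
      intro p hp
      rw [Finset.HasAntidiagonal.mem_antidiagonal] at hp
      have hle : p.2 0 ≤ m 0 := by
        have := congrArg (fun e : Fin 3 →₀ ℕ => e 0) hp
        simp only [Finsupp.add_apply] at this
        omega
      rw [← Finset.mul_sum]
      congr 1
      have hS : MvPowerSeries.coeff p.2 Ssp
          = ∑ a ∈ Finset.Icc 1 (p.2 0),
              MvPowerSeries.coeff p.2 ((Xv 0)^a * Xv 1 * (Asp a)⁻¹) := rfl
      rw [hS]
      apply Finset.sum_subset
      · exact Finset.Icc_subset_Icc le_rfl hle
      · intro x hx1 hx2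
        rw [Finset.mem_Icc] at hx1 hx2
        exact coeff_Xpow_zero x p.2 (by omega)
    rw [Finset.sum_congr rfl step1, Finset.sum_comm]
    apply Finset.sum_congr rfl
    intro a haa
    rw [Finset.mem_Icc] at haa
    rw [← MvPowerSeries.coeff_mul, Gsp_mul_unit a (by omega)]
  rw [mul_sub, mul_one, map_sub, hmulS, coeff_Gsp_decomp m, MvPowerSeries.coeff_one]
  ring
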